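/- Let m, n ≥ 1, let G' ∈ ℝ^{m×n}, and let Δ ≥ 0. Then the robust victim's security value satisfies max_{y ∈ Δ(n)} min_{x ∈ Δ(m), D ∈ 𝒟} xᵀ(G' − D)y = v_{G'} − Δ, where v_{G'} is the value of the zero-sum game G'. -/

import Mathlib

open Matrix Finset

/-- Set of admissible (stealthy) deceptions: every column has ℓ1 norm at most `Δ`. -/
def Dset (m n : ℕ) (Δ : ℝ) : Set (Matrix (Fin m) (Fin n) ℝ) :=
  {D | ∀ j, ∑ i, |D i j| ≤ Δ}

/-- Row player's best-response value against `y`: `min_{x ∈ Δ(m)} xᵀ A y`. -/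
noncomputable def innerMin {m n : ℕ} (A : Matrix (Fin m) (Fin n) ℝ) (y : Fin n → ℝ) : ℝ :=
  sInf {r | ∃ x ∈ stdSimplex ℝ (Fin m), r = x ⬝ᵥ A *ᵥ y}

/-- Value of the zero-sum game `A`: `max_{y ∈ Δ(n)} min_{x ∈ Δ(m)} xᵀ A y`. -/
noncomputable def gameValue {m n : ℕ} (A : Matrix (Fin m) (Fin n) ℝ) : ℝ :=
  sSup {r | ∃ y ∈ stdSimplex ℝ (Fin n), r = innerMin A y}

/-- Column player's security-policy set `S(A)`. -/
def secPolicies {m n : ℕ} (A : Matrix (Fin m) (Fin n) ℝ) : Set (Fin n → ℝ) :=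
  {y | y ∈ stdSimplex ℝ (Fin n) ∧ ∀ i, gameValue A ≤ (A *ᵥ y) i}

/-- Set of inducible values `V_ind(G)`. -/
def Vind {m n : ℕ} (G : Matrix (Fin m) (Fin n) ℝ) (Δ : ℝ) : Set ℝ :=
  {v | ∃ D ∈ Dset m n Δ, ∃ y ∈ stdSimplex ℝ (Fin n), ∀ i, v ≤ ((G + D) *ᵥ y) i}

/-- Robust victim objective: `min_{x ∈ Δ(m), D ∈ 𝒟} xᵀ (G' - D) y`. -/
noncomputable def robustObj {m n : ℕ} (G' : Matrix (Fin m) (Fin n) ℝ) (Δ : ℝ)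
    (y : Fin n → ℝ) : ℝ :=
  sInf {r | ∃ x ∈ stdSimplex ℝ (Fin m), ∃ D ∈ Dset m n Δ, r = x ⬝ᵥ (G' - D) *ᵥ y}

section Aux

variable {m n : ℕ}

lemma mySingle_mem_simplex (i0 : Fin m) :
    (fun i => if i = i0 then (1:ℝ) else 0) ∈ stdSimplex ℝ (Fin m) := by
  constructor
  · intro i; dsimp; split <;> norm_num
  · simp

lemma mySingle_dotProduct (i0 : Fin m) (v : Fin m → ℝ) :
    (fun i => if i = i0 then (1:ℝ) else 0) ⬝ᵥ v = v i0 := by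
  simp [dotProduct, ite_mul]

/-- Lower bound: `c ≤ xᵀ v` for `x` in the simplex when `c ≤ v i` for all `i`. -/
lemma le_dotProduct_of_forall {x v : Fin m → ℝ} (hx : x ∈ stdSimplex ℝ (Fin m))
    {c : ℝ} (hc : ∀ i, c ≤ v i) : c ≤ x ⬝ᵥ v := by
  have h1 : ∑ i, x i * c ≤ ∑ i, x i * v i :=
    Finset.sum_le_sum fun i _ => mul_le_mul_of_nonneg_left (hc i) (hx.1 i)
  have h2 : ∑ i, x i * c = c := by rw [← Finset.sum_mul, hx.2, one_mul]
  calc c = ∑ i, x i * c := h2.symm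
    _ ≤ ∑ i, x i * v i := h1
    _ = x ⬝ᵥ v := rfl

lemma innerMin_eq (hm : 1 ≤ m) (A : Matrix (Fin m) (Fin n) ℝ) (y : Fin n → ℝ) :
    innerMin A y =
      Finset.univ.inf' (Finset.univ_nonempty_iff.mpr ⟨⟨0, hm⟩⟩) (fun i => (A *ᵥ y) i) := by
  have hne : (Finset.univ : Finset (Fin m)).Nonempty := Finset.univ_nonempty_iff.mpr ⟨⟨0, hm⟩⟩
  set c := Finset.univ.inf' hne (fun i => (A *ᵥ y) i) with hc
  obtain ⟨i0, -, hi0⟩ := Finset.exists_mem_eq_inf' hne (fun i => (A *ᵥ y) i)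
  have hmem : c ∈ {r | ∃ x ∈ stdSimplex ℝ (Fin m), r = x ⬝ᵥ A *ᵥ y} :=
    ⟨_, mySingle_mem_simplex i0, by rw [mySingle_dotProduct, ← hi0]⟩
  have hlb : ∀ r ∈ {r | ∃ x ∈ stdSimplex ℝ (Fin m), r = x ⬝ᵥ A *ᵥ y}, c ≤ r := by
    rintro r ⟨x, hx, rfl⟩
    exact le_dotProduct_of_forall hx fun i => Finset.inf'_le _ (Finset.mem_univ i)
  exact le_antisymm (csInf_le ⟨c, hlb⟩ hmem) (le_csInf ⟨c, hmem⟩ hlb)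

lemma dotProduct_D_le {x : Fin m → ℝ} (hx : x ∈ stdSimplex ℝ (Fin m))
    {y : Fin n → ℝ} (hy : y ∈ stdSimplex ℝ (Fin n))
    {Δ : ℝ} {D : Matrix (Fin m) (Fin n) ℝ} (hD : D ∈ Dset m n Δ) :
    x ⬝ᵥ D *ᵥ y ≤ Δ := by
  have hx1 : ∀ i, x i ≤ 1 := by
    intro i
    calc x i ≤ ∑ k, x k := Finset.single_le_sum (fun k _ => hx.1 k) (Finset.mem_univ i)
      _ = 1 := hx.2
  have key : ∀ i j, x i * (D i j * y j) ≤ |D i j| * y j := by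
    intro i j
    have h1 : D i j * y j ≤ |D i j| * y j :=
      mul_le_mul_of_nonneg_right (le_abs_self _) (hy.1 j)
    have h2 : (0:ℝ) ≤ |D i j| * y j := mul_nonneg (abs_nonneg _) (hy.1 j)
    nlinarith [hx.1 i, hx1 i]
  calc x ⬝ᵥ D *ᵥ y = ∑ i, ∑ j, x i * (D i j * y j) := by
        simp [dotProduct, Matrix.mulVec, Finset.mul_sum]
    _ = ∑ j, ∑ i, x i * (D i j * y j) := Finset.sum_comm
    _ ≤ ∑ j, ∑ i, |D i j| * y j :=
        Finset.sum_le_sum fun j _ => Finset.sum_le_sum fun i _ => key i j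
    _ = ∑ j, (∑ i, |D i j|) * y j := by simp [Finset.sum_mul]
    _ ≤ ∑ j, Δ * y j :=
        Finset.sum_le_sum fun j _ => mul_le_mul_of_nonneg_right (hD j) (hy.1 j)
    _ = Δ := by rw [← Finset.mul_sum, hy.2, mul_one]

lemma robustObj_eq (hm : 1 ≤ m) (G' : Matrix (Fin m) (Fin n) ℝ)
    {Δ : ℝ} (hΔ : 0 ≤ Δ) {y : Fin n → ℝ} (hy : y ∈ stdSimplex ℝ (Fin n)) :
    robustObj G' Δ y = innerMin G' y - Δ := by
  have hne : (Finset.univ : Finset (Fin m)).Nonempty := Finset.univ_nonempty_iff.mpr ⟨⟨0, hm⟩⟩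
  rw [innerMin_eq hm]
  set c := Finset.univ.inf' hne (fun i => (G' *ᵥ y) i) with hcdef
  obtain ⟨i0, -, hi0⟩ := Finset.exists_mem_eq_inf' hne (fun i => (G' *ᵥ y) i)
  set S := {r | ∃ x ∈ stdSimplex ℝ (Fin m), ∃ D ∈ Dset m n Δ, r = x ⬝ᵥ (G' - D) *ᵥ y} with hS
  have hmem : c - Δ ∈ S := by
    set Dm : Matrix (Fin m) (Fin n) ℝ := Matrix.of (fun i _ => if i = i0 then Δ else 0) with hDm
    refine ⟨_, mySingle_mem_simplex i0, Dm, ?_, ?_⟩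
    · intro j
      simp [hDm, apply_ite abs, abs_of_nonneg hΔ, Finset.sum_ite_eq']
    · rw [mySingle_dotProduct]
      have : ((G' - Dm) *ᵥ y) i0 = (G' *ᵥ y) i0 - Δ := by
        simp [hDm, Matrix.sub_mulVec, Matrix.mulVec, dotProduct, sub_mul,
          Finset.sum_sub_distrib, ← Finset.mul_sum, hy.2]
      rw [this, ← hi0]
  have hlb : ∀ r ∈ S, c - Δ ≤ r := by
    rintro r ⟨x, hx, D, hD, rfl⟩
    have h1 : c ≤ x ⬝ᵥ G' *ᵥ y :=
      le_dotProduct_of_forall hx fun i => Finset.inf'_le _ (Finset.mem_univ i)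
    have h2 : x ⬝ᵥ D *ᵥ y ≤ Δ := dotProduct_D_le hx hy hD
    have : x ⬝ᵥ (G' - D) *ᵥ y = x ⬝ᵥ G' *ᵥ y - x ⬝ᵥ D *ᵥ y := by
      rw [Matrix.sub_mulVec, dotProduct_sub]
    linarith
  exact le_antisymm (csInf_le ⟨c - Δ, hlb⟩ hmem) (le_csInf ⟨c - Δ, hmem⟩ hlb)

end Aux

/-- The robust victim's security value is `v_{G'} - Δ`:
the max over `y ∈ Δ(n)` of the robust objective equals `gameValue G' - Δ` and is attained. -/
theorem robust_security_value {m n : ℕ} (hm : 1 ≤ m) (hn : 1 ≤ n)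
    (G' : Matrix (Fin m) (Fin n) ℝ) (Δ : ℝ) (hΔ : 0 ≤ Δ) :
    IsGreatest {r | ∃ y ∈ stdSimplex ℝ (Fin n), r = robustObj G' Δ y}
      (gameValue G' - Δ) := by
  have hne : (Finset.univ : Finset (Fin m)).Nonempty := Finset.univ_nonempty_iff.mpr ⟨⟨0, hm⟩⟩
  set f : (Fin n → ℝ) → ℝ := fun y => Finset.univ.inf' hne (fun i => (G' *ᵥ y) i) with hf
  have hfc : Continuous f := by
    apply Continuous.finset_inf'_apply hne
    intro i _
    simp only [Matrix.mulVec, dotProduct]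
    exact continuous_finset_sum _ fun j _ =>
      (continuous_const.mul (continuous_apply j))
  have hKc : IsCompact (stdSimplex ℝ (Fin n)) := isCompact_stdSimplex _ _
  have hKne : (stdSimplex ℝ (Fin n)).Nonempty :=
    ⟨_, mySingle_mem_simplex (⟨0, hn⟩ : Fin n)⟩
  obtain ⟨y0, hy0, hmax⟩ := hKc.exists_isMaxOn hKne hfc.continuousOn
  have hval : gameValue G' = f y0 := by
    have hg : IsGreatest {r | ∃ y ∈ stdSimplex ℝ (Fin n), r = innerMin G' y} (f y0) := by
      constructor
      · exact ⟨y0, hy0, (innerMin_eq hm G' y0).symm⟩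
      · rintro r ⟨y, hy, rfl⟩
        rw [innerMin_eq hm G' y]
        exact hmax hy
    exact hg.csSup_eq
  constructor
  · refine ⟨y0, hy0, ?_⟩
    rw [robustObj_eq hm G' hΔ hy0, innerMin_eq hm G' y0, hval]
  · rintro r ⟨y, hy, rfl⟩
    rw [robustObj_eq hm G' hΔ hy, innerMin_eq hm G' y, hval]
    have := hmax hy
    simp only [sub_le_sub_iff_right]
    exact this
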